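/- arXiv:2305.00765 — 2 statements merged into one kernel-verified Lean document; each statement's English description precedes it below -/
import Mathlib

section
/- For every integer n ≥ 3 and every 1 ≤ m < φ(n)/2, the rational number (2B_{2m}/(2m)!) · ω_m(n) is an integer, where ω_m(n) is defined by the expansion W_n(x)/Φ_n(1) = 1 + 2 Σ_{m≥1} (B_{2m}/(2m)!) ω_m(n) x^{2m}. -/
open Finset Polynomial Real

/-- `V_n(x) = ∏_{1 ≤ k < n/2} (x^2 + 4 sin²(πk/n))`, with `V_1 = V_2 = 1`. -/
noncomputable def V (n : ℕ) : Polynomial ℝ :=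
  ∏ k ∈ (Finset.Ico 1 n).filter (fun k => 2 * k < n),
    (Polynomial.X ^ 2 + Polynomial.C (4 * Real.sin (Real.pi * k / n) ^ 2))

/-- `W_n(x) = ∏_{1 ≤ k < n/2, gcd(k,n)=1} (x^2 + 4 sin²(πk/n))`, with `W_1 = W_2 = 1`. -/
noncomputable def W (n : ℕ) : Polynomial ℝ :=
  ∏ k ∈ (Finset.Ico 1 n).filter (fun k => 2 * k < n ∧ Nat.gcd k n = 1),
    (Polynomial.X ^ 2 + Polynomial.C (4 * Real.sin (Real.pi * k / n) ^ 2))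

/-- `ω_m(n)`, defined by the expansion
`W_n(x)/Φ_n(1) = 1 + 2 ∑_{m ≥ 1} (B_{2m}/(2m)!) ω_m(n) x^{2m}`; since
`B_{2m} ≠ 0` this means `ω_m(n) = ((2m)!/(2B_{2m})) ⬝ (coeff_{2m} W_n)/Φ_n(1)`. -/
noncomputable def omegaAK (n m : ℕ) : ℝ :=
  ((((2 * m).factorial : ℚ) / (2 * _root_.bernoulli (2 * m)) : ℚ) : ℝ) *
    ((W n).coeff (2 * m) / (Polynomial.cyclotomic n ℝ).eval 1)


lemma bern_ne_zero (m : ℕ) (hm : 1 ≤ m) : (_root_.bernoulli (2 * m) : ℚ) ≠ 0 := by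
  intro h0
  have hz := riemannZeta_two_mul_nat (k := m) (by omega)
  rw [h0] at hz
  simp only [Rat.cast_zero, mul_zero, zero_div] at hz
  have hne : riemannZeta (2 * m) ≠ 0 := by
    apply riemannZeta_ne_zero_of_one_lt_re
    have : ((2 * (m : ℂ))).re = (2 * (m : ℝ)) := by norm_cast
    push_cast
    rw [this]
    have : (1:ℝ) < 2 * m := by exact_mod_cast (show (1:ℕ) < 2*m by omega)
    exact this
  apply hne
  push_cast at hz ⊢
  exact hz

lemma card_S (n : ℕ) (hn : 3 ≤ n) :
    2 * ((Finset.Ico 1 n).filter (fun k => 2 * k < n ∧ Nat.gcd k n = 1)).card = n.totient := by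
  have h2 : ∀ k, 2 * k = n → Nat.gcd k n = 1 → False := by
    intro k hk hg
    have : Nat.gcd k n = k := Nat.gcd_eq_left ⟨2, by omega⟩
    omega
  rw [Nat.totient]
  have hset : (Finset.range n).filter n.Coprime =
      (Finset.Ico 1 n).filter (fun k => Nat.gcd k n = 1) := by
    ext k
    simp only [mem_filter, mem_range, mem_Ico, Nat.Coprime, Nat.gcd_comm n k]
    constructor
    · rintro ⟨h1, h2⟩
      refine ⟨⟨?_, h1⟩, h2⟩
      rcases Nat.eq_zero_or_pos k with rfl | h
      · simp [Nat.gcd_comm] at h2; omega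
      · omega
    · rintro ⟨⟨_, h1⟩, h2⟩; exact ⟨h1, h2⟩
  rw [hset]
  set S := (Finset.Ico 1 n).filter (fun k => 2 * k < n ∧ Nat.gcd k n = 1) with hS
  have key : ((Finset.Ico 1 n).filter (fun k => Nat.gcd k n = 1)).card = S.card + S.card := by
    rw [← Finset.card_filter_add_card_filter_not
      (s := (Finset.Ico 1 n).filter (fun k => Nat.gcd k n = 1)) (p := fun k => 2 * k < n)]
    congr 1
    · rw [Finset.filter_filter, hS]
      congr 1
      ext k; simp only [mem_filter]; tauto
    · have hbij : ((Finset.Ico 1 n).filter (fun k => Nat.gcd k n = 1)).filter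
          (fun k => ¬ 2 * k < n) = S.image (fun k => n - k) := by
        ext j
        simp only [hS, mem_image, mem_filter, mem_Ico]
        constructor
        · rintro ⟨⟨⟨hj1, hjn⟩, hg⟩, hlt⟩
          have h3 : ¬ (2 * j = n) := fun h => h2 j h hg
          refine ⟨n - j, ⟨⟨by omega, by omega⟩, by omega, ?_⟩, by omega⟩
          rwa [Nat.gcd_self_sub_left (by omega)]
        · rintro ⟨k, ⟨⟨hk1, hkn⟩, hlt, hg⟩, rfl⟩
          refine ⟨⟨⟨by omega, by omega⟩, ?_⟩, by omega⟩
          rwa [Nat.gcd_self_sub_left (by omega)]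
      rw [hbij, Finset.card_image_of_injOn]
      intro a ha b hb hab
      have hab' : n - a = n - b := hab
      simp only [hS, coe_filter, Set.mem_setOf_eq, mem_Ico] at ha hb
      omega
  omega

noncomputable def zet (n : ℕ) : ℂ := Complex.exp (2 * Real.pi * Complex.I / ((2 * n : ℕ) : ℂ))

lemma zet_prim (n : ℕ) (hn : 3 ≤ n) : IsPrimitiveRoot (zet n) (2 * n) :=
  Complex.isPrimitiveRoot_exp (2 * n) (by omega)

lemma zet_pow_n (n : ℕ) (hn : 3 ≤ n) : zet n ^ n = -1 := by
  rw [zet, ← Complex.exp_nat_mul]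
  have hne : (n : ℂ) ≠ 0 := Nat.cast_ne_zero.mpr (by omega)
  have : (n : ℂ) * (2 * Real.pi * Complex.I / (2 * n)) = Real.pi * Complex.I := by
    field_simp
  push_cast
  rw [this, Complex.exp_pi_mul_I]

lemma factor_eq (n : ℕ) (hn : 3 ≤ n) (k : ℕ) (hk1 : 1 ≤ k) (hk2 : 2 * k < n) :
    ((X : Polynomial ℂ) ^ 2 - 1) ^ 2 + C (((4 * Real.sin (Real.pi * k / n) ^ 2 : ℝ) : ℂ)) * X ^ 2
      = (X - C (zet n ^ k)) * (X - C (zet n ^ (n - k))) *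
        (X - C (zet n ^ (n + k))) * (X - C (zet n ^ (2 * n - k))) := by
  have hne : (n : ℂ) ≠ 0 := Nat.cast_ne_zero.mpr (by omega)
  set e := zet n ^ k with he0
  set u := zet n ^ (2 * n - k) with hu0
  have heu : e * u = 1 := by
    rw [he0, hu0, ← pow_add]
    have : k + (2 * n - k) = 2 * n := by omega
    rw [this]
    exact (zet_prim n hn).pow_eq_one
  have h1 : zet n ^ (n - k) = -u := by
    have hh : zet n ^ (n - k) * zet n ^ n = u := by
      rw [← pow_add]
      congr 1
      omega
    rw [zet_pow_n n hn] at hh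
    linear_combination -hh
  have h2 : zet n ^ (n + k) = -e := by
    rw [pow_add, zet_pow_n n hn]
    ring
  set θ := Real.pi * k / n with hθ0
  have he : e = Complex.exp ((θ : ℂ) * Complex.I) := by
    rw [he0, zet, ← Complex.exp_nat_mul]
    congr 1
    rw [hθ0]
    push_cast
    field_simp
  have hu : u = Complex.exp (-(θ : ℂ) * Complex.I) := by
    have : u = e⁻¹ := eq_inv_of_mul_eq_one_right (by linear_combination heu)
    rw [this, he, ← Complex.exp_neg]
    ring_nf
  have hc : (((4 * Real.sin θ ^ 2 : ℝ)) : ℂ) = 2 - (e ^ 2 + u ^ 2) := by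
    have hsum : e ^ 2 + u ^ 2 = 2 * Complex.cos ((2 * θ : ℝ) : ℂ) := by
      rw [Complex.two_cos, he, hu, ← Complex.exp_nat_mul, ← Complex.exp_nat_mul]
      push_cast
      ring_nf
    rw [hsum, ← Complex.ofReal_cos]
    have hreal : (4 * Real.sin θ ^ 2 : ℝ) = 2 - 2 * Real.cos (2 * θ) := by
      nlinarith [Real.cos_two_mul θ, Real.sin_sq_add_cos_sq θ]
    rw [hreal]
    push_cast
    ring
  rw [h1, h2, hc]
  have hCu : C e * C u = 1 := by rw [← C_mul, heu, map_one]
  simp only [map_sub, map_add, map_pow, map_neg, map_ofNat]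
  linear_combination (-(C e * C u + 1)) * hCu
noncomputable def Gpoly (n : ℕ) : Polynomial ℤ :=
  if Odd n then cyclotomic n ℤ * cyclotomic (2 * n) ℤ else cyclotomic (2 * n) ℤ

/-- generic: cyclotomic as a product over exponents -/
lemma cyclo_eq_prod {N : ℕ} (hN : 2 ≤ N) {ξ : ℂ} (hprim : IsPrimitiveRoot ξ N) :
    cyclotomic N ℂ =
      ∏ j ∈ (Finset.Ico 1 N).filter (fun j => Nat.gcd j N = 1), (X - C (ξ ^ j)) := by
  have hN0 : 0 < N := by omega
  have : NeZero N := ⟨by omega⟩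
  have himg : primitiveRoots N ℂ =
      ((Finset.Ico 1 N).filter (fun j => Nat.gcd j N = 1)).image (fun j => ξ ^ j) := by
    ext μ
    simp only [mem_primitiveRoots hN0, mem_image, mem_filter, mem_Ico]
    constructor
    · intro hμ
      obtain ⟨i, hi, rfl⟩ := hprim.eq_pow_of_pow_eq_one hμ.pow_eq_one
      have hcop : i.Coprime N := (hprim.pow_iff_coprime hN0 i).mp hμ
      have hi1 : 1 ≤ i := by
        rcases Nat.eq_zero_or_pos i with rfl | h
        · exfalso
          simp only [pow_zero] at hμ
          have := hμ.eq_orderOf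
          rw [orderOf_one] at this
          omega
        · exact h
      exact ⟨i, ⟨⟨hi1, hi⟩, hcop⟩, rfl⟩
    · rintro ⟨i, ⟨⟨hi1, hi⟩, hg⟩, rfl⟩
      exact (hprim.pow_iff_coprime hN0 i).mpr hg
  rw [cyclotomic_eq_prod_X_sub_primitiveRoots hprim, himg, Finset.prod_image]
  intro a ha b hb hab
  simp only [mem_coe, mem_filter, mem_Ico] at ha hb
  exact hprim.pow_inj (by omega) (by omega) hab

lemma U_biUnion (n : ℕ) (hn : 3 ≤ n) :
    (Finset.Ico 1 (2 * n)).filter (fun j => Nat.gcd j n = 1) =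
      ((Finset.Ico 1 n).filter (fun k => 2 * k < n ∧ Nat.gcd k n = 1)).biUnion
        (fun k => {k, n - k, n + k, 2 * n - k}) := by
  have h2 : ∀ j, Nat.gcd j n = 1 → 2 * j ≠ n := by
    intro j hg hj
    have : Nat.gcd j n = j := Nat.gcd_eq_left ⟨2, by omega⟩
    omega
  have h3 : ∀ j, Nat.gcd j n = 1 → 2 * j ≠ 3 * n := by
    intro j hg hj
    have hne : Even n := by
      rcases Nat.even_or_odd n with h | h
      · exact h
      · exfalso
        have : Even (3 * n) := by rw [← hj]; exact ⟨j, by omega⟩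
        rcases this with ⟨t, ht⟩
        rcases h with ⟨s, hs⟩
        omega
    rcases hne with ⟨s, hs⟩
    have hj3 : j = 3 * s := by omega
    have : Nat.gcd j n = s * Nat.gcd 3 2 := by
      rw [hj3, hs, show s + s = s * 2 by ring, show 3 * s = s * 3 by ring, Nat.gcd_mul_left]
    rw [show Nat.gcd 3 2 = 1 by decide, mul_one] at this
    omega
  have hgn : ∀ j, j ≤ n → Nat.gcd (n - j) n = Nat.gcd j n := fun j hj =>
    Nat.gcd_self_sub_left hj
  have hga : ∀ j, Nat.gcd (n + j) n = Nat.gcd j n := by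
    intro j
    rw [show n + j = j + n by ring, Nat.gcd_add_self_left]
  ext j
  simp only [mem_biUnion, mem_filter, mem_Ico, mem_insert, mem_singleton]
  constructor
  · rintro ⟨⟨hj1, hj2⟩, hg⟩
    have hjn : j ≠ n := by
      intro h; rw [h, Nat.gcd_self] at hg; omega
    rcases lt_trichotomy (2 * j) n with hc | hc | hc
    · exact ⟨j, ⟨⟨by omega, by omega⟩, hc, hg⟩, Or.inl rfl⟩
    · exact absurd hc (h2 j hg)
    · rcases lt_or_ge j n with hj | hj
      · refine ⟨n - j, ⟨⟨by omega, by omega⟩, by omega, ?_⟩, by right; left; omega⟩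
        rw [hgn j (by omega)]
        exact hg
      · rcases lt_trichotomy (2 * (j - n)) n with hd | hd | hd
        · refine ⟨j - n, ⟨⟨by omega, by omega⟩, hd, ?_⟩, by right; right; left; omega⟩
          have : Nat.gcd (n + (j - n)) n = Nat.gcd (j - n) n := hga (j - n)
          rw [show n + (j - n) = j by omega] at this
          omega
        · exfalso; exact h3 j hg (by omega)
        · refine ⟨2 * n - j, ⟨⟨by omega, by omega⟩, by omega, ?_⟩, by right; right; right; omega⟩
          have e1 : Nat.gcd (n - (j - n)) n = Nat.gcd (j - n) n := hgn (j - n) (by omega)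
          have e2 : Nat.gcd (n + (j - n)) n = Nat.gcd (j - n) n := hga (j - n)
          rw [show n + (j - n) = j by omega] at e2
          rw [show 2 * n - j = n - (j - n) by omega]
          omega
  · rintro ⟨k, ⟨⟨hk1, hk2⟩, hklt, hg⟩, hj⟩
    have e1 : Nat.gcd (n - k) n = Nat.gcd k n := hgn k (by omega)
    have e2 : Nat.gcd (n + k) n = Nat.gcd k n := hga k
    have e3 : Nat.gcd (2 * n - k) n = Nat.gcd k n := by
      rw [show 2 * n - k = n + (n - k) by omega, hga (n - k), e1]
    rcases hj with rfl | rfl | rfl | rfl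
    · exact ⟨⟨by omega, by omega⟩, hg⟩
    · exact ⟨⟨by omega, by omega⟩, by omega⟩
    · exact ⟨⟨by omega, by omega⟩, by omega⟩
    · exact ⟨⟨by omega, by omega⟩, by omega⟩

lemma two_coprime_of_odd {n : ℕ} (ho : Odd n) : Nat.Coprime 2 n :=
  (Nat.prime_two.coprime_iff_not_dvd).mpr (by
    rintro ⟨t, ht⟩; rcases ho with ⟨s, hs⟩; omega)

lemma map_G_eq (n : ℕ) (hn : 3 ≤ n) :
    (Gpoly n).map (Int.castRingHom ℂ) =
      ∏ j ∈ (Finset.Ico 1 (2 * n)).filter (fun j => Nat.gcd j n = 1),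
        (X - C (zet n ^ j)) := by
  have hprim := zet_prim n hn
  have hcy2n := cyclo_eq_prod (show 2 ≤ 2 * n by omega) hprim
  rcases Nat.even_or_odd n with he | ho
  · rw [Gpoly, if_neg (by rw [Nat.odd_iff, Nat.even_iff] at *; omega), map_cyclotomic_int, hcy2n]
    congr 1
    ext j
    simp only [mem_filter, mem_Ico]
    constructor
    · rintro ⟨hb, hg⟩
      exact ⟨hb, Nat.Coprime.coprime_dvd_right ⟨2, by ring⟩ hg⟩
    · rintro ⟨hb, hg⟩
      refine ⟨hb, ?_⟩
      have hodd : ¬ 2 ∣ j := by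
        intro h2j
        rcases he with ⟨t, ht⟩
        have : 2 ∣ Nat.gcd j n := Nat.dvd_gcd h2j ⟨t, by omega⟩
        omega
      have hc2 : Nat.Coprime j 2 :=
        Nat.Coprime.symm ((Nat.prime_two.coprime_iff_not_dvd).mpr hodd)
      exact Nat.Coprime.mul_right hc2 hg
  · rw [Gpoly, if_pos ho, Polynomial.map_mul, map_cyclotomic_int, map_cyclotomic_int]
    have hprimn : IsPrimitiveRoot (zet n ^ 2) n := hprim.pow (by omega) rfl
    have hcyn := cyclo_eq_prod (show 2 ≤ n by omega) hprimn
    rw [← Finset.prod_filter_mul_prod_filter_not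
      ((Finset.Ico 1 (2 * n)).filter (fun j => Nat.gcd j n = 1)) (fun j => 2 ∣ j)]
    have himg : ((Finset.Ico 1 (2 * n)).filter (fun j => Nat.gcd j n = 1)).filter
        (fun j => 2 ∣ j) =
        ((Finset.Ico 1 n).filter (fun i => Nat.gcd i n = 1)).image (fun i => 2 * i) := by
      ext j
      simp only [mem_filter, mem_Ico, mem_image]
      constructor
      · rintro ⟨⟨⟨hj1, hj2⟩, hg⟩, i, rfl⟩
        exact ⟨i, ⟨⟨by omega, by omega⟩,
          Nat.Coprime.coprime_dvd_left ⟨2, by ring⟩ hg⟩, by ring⟩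
      · rintro ⟨i, ⟨⟨hi1, hi2⟩, hg⟩, rfl⟩
        exact ⟨⟨⟨by omega, by omega⟩, Nat.Coprime.mul (two_coprime_of_odd ho) hg⟩, ⟨i, rfl⟩⟩
    have hodds : ((Finset.Ico 1 (2 * n)).filter (fun j => Nat.gcd j n = 1)).filter
        (fun j => ¬ 2 ∣ j) =
        (Finset.Ico 1 (2 * n)).filter (fun j => Nat.gcd j (2 * n) = 1) := by
      ext j
      simp only [mem_filter, mem_Ico]
      constructor
      · rintro ⟨⟨hb, hg⟩, hnd⟩
        exact ⟨hb, Nat.Coprime.mul_right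
          (Nat.Coprime.symm ((Nat.prime_two.coprime_iff_not_dvd).mpr hnd)) hg⟩
      · rintro ⟨hb, hg⟩
        refine ⟨⟨hb, Nat.Coprime.coprime_dvd_right ⟨2, by ring⟩ hg⟩, ?_⟩
        intro h2j
        have hcj : Nat.Coprime j 2 := Nat.Coprime.coprime_dvd_right ⟨n, by ring⟩ hg
        rcases h2j with ⟨t, ht⟩
        have hg2 : Nat.gcd j 2 = 2 := by
          rw [Nat.gcd_comm]
          exact Nat.gcd_eq_left ⟨t, by omega⟩
        rw [Nat.Coprime] at hcj
        omega
      
    rw [himg, hodds, Finset.prod_image (by intro a _ b _ hab; simp only at hab; omega), ← hcy2n]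
    have : ∀ i, (zet n : ℂ) ^ (2 * i) = (zet n ^ 2) ^ i := fun i => pow_mul _ 2 i
    have heq : ∏ i ∈ (Finset.Ico 1 n).filter (fun i => Nat.gcd i n = 1),
        (X - C (zet n ^ (2 * i))) = cyclotomic n ℂ := by
      rw [hcyn]
      apply Finset.prod_congr rfl
      intro i _
      rw [this i]
    rw [heq, mul_comm]
lemma map_G_prod_factors (n : ℕ) (hn : 3 ≤ n) :
    (Gpoly n).map (Int.castRingHom ℂ) =
      ∏ k ∈ (Finset.Ico 1 n).filter (fun k => 2 * k < n ∧ Nat.gcd k n = 1),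
        (((X : Polynomial ℂ) ^ 2 - 1) ^ 2 +
          C (((4 * Real.sin (Real.pi * k / n) ^ 2 : ℝ) : ℂ)) * X ^ 2) := by
  have hdisj : (↑((Finset.Ico 1 n).filter (fun k => 2 * k < n ∧ Nat.gcd k n = 1)) :
      Set ℕ).PairwiseDisjoint (fun k => ({k, n - k, n + k, 2 * n - k} : Finset ℕ)) := by
    intro x hx y hy hxy
    simp only [coe_filter, Set.mem_setOf_eq, mem_Ico] at hx hy
    simp only [Function.onFun]
    rw [Finset.disjoint_left]
    intro j hjx hjy
    simp only [mem_insert, mem_singleton] at hjx hjy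
    omega
  rw [map_G_eq n hn, U_biUnion n hn, Finset.prod_biUnion hdisj]
  apply Finset.prod_congr rfl
  intro k hk
  simp only [mem_filter, mem_Ico] at hk
  obtain ⟨⟨hk1, hkn⟩, hklt, hg⟩ := hk
  rw [factor_eq n hn k hk1 hklt]
  have d1 : k ∉ ({n - k, n + k, 2 * n - k} : Finset ℕ) := by
    simp only [mem_insert, mem_singleton]; omega
  have d2 : n - k ∉ ({n + k, 2 * n - k} : Finset ℕ) := by
    simp only [mem_insert, mem_singleton]; omega
  have d3 : n + k ∉ ({2 * n - k} : Finset ℕ) := by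
    simp only [mem_singleton]; omega
  rw [Finset.prod_insert d1, Finset.prod_insert d2, Finset.prod_insert d3,
    Finset.prod_singleton]
  ring
noncomputable def Sd (n : ℕ) : ℕ :=
  ((Finset.Ico 1 n).filter (fun k => 2 * k < n ∧ Nat.gcd k n = 1)).card

lemma Wc_eq (n : ℕ) : (W n).map (algebraMap ℝ ℂ) =
    ∏ k ∈ (Finset.Ico 1 n).filter (fun k => 2 * k < n ∧ Nat.gcd k n = 1),
      ((X : Polynomial ℂ) ^ 2 + C (((4 * Real.sin (Real.pi * k / n) ^ 2 : ℝ) : ℂ))) := by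
  rw [W, Polynomial.map_prod]
  apply Finset.prod_congr rfl
  intro k _
  simp only [Polynomial.map_add, Polynomial.map_pow, Polynomial.map_X, Polynomial.map_C]
  norm_num [Complex.coe_algebraMap]

lemma Wc_monic (n : ℕ) : ((W n).map (algebraMap ℝ ℂ)).Monic := by
  rw [Wc_eq]
  exact monic_prod_of_monic _ _ (fun k _ => monic_X_pow_add_C _ two_ne_zero)

lemma Wc_natDegree (n : ℕ) : ((W n).map (algebraMap ℝ ℂ)).natDegree = 2 * Sd n := by
  rw [Wc_eq, natDegree_prod_of_monic _ _ (fun k _ => monic_X_pow_add_C _ two_ne_zero)]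
  simp only [natDegree_X_pow_add_C]
  rw [Finset.sum_const, smul_eq_mul, Sd, mul_comm]

lemma G_eq_sum (n : ℕ) (hn : 3 ≤ n) :
    (Gpoly n).map (Int.castRingHom ℂ) =
      ∑ j ∈ Finset.range (2 * Sd n + 1),
        C (((W n).map (algebraMap ℝ ℂ)).coeff j) *
          (((X : Polynomial ℂ) ^ 2 - 1) ^ j * X ^ (2 * Sd n - j)) := by
  set S := (Finset.Ico 1 n).filter (fun k => 2 * k < n ∧ Nat.gcd k n = 1) with hS
  set d := Sd n with hd
  set Wc := (W n).map (algebraMap ℝ ℂ) with hWc0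
  set K := RatFunc ℂ
  set px : Polynomial ℂ →+* K := (algebraMap (Polynomial ℂ) K : Polynomial ℂ →+* K) with hpx
  have hXne : px X ≠ 0 := RatFunc.algebraMap_ne_zero X_ne_zero
  set y : K := px (X ^ 2 - 1) / px X with hy
  have hCpx : ∀ c : ℂ, algebraMap ℂ K c = px (C c) := by
    intro c
    rw [IsScalarTower.algebraMap_apply ℂ (Polynomial ℂ) K, Polynomial.algebraMap_eq]
  have step1 : aeval y Wc =
      px (∏ k ∈ S, (((X : Polynomial ℂ) ^ 2 - 1) ^ 2 +
        C (((4 * Real.sin (Real.pi * k / n) ^ 2 : ℝ) : ℂ)) * X ^ 2)) / (px X) ^ (2 * d) := by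
    rw [hWc0, Wc_eq, map_prod, map_prod]
    have : ∀ k ∈ S, (aeval y) ((X : Polynomial ℂ) ^ 2 +
          C (((4 * Real.sin (Real.pi * k / n) ^ 2 : ℝ) : ℂ))) =
        px (((X : Polynomial ℂ) ^ 2 - 1) ^ 2 +
          C (((4 * Real.sin (Real.pi * k / n) ^ 2 : ℝ) : ℂ)) * X ^ 2) / (px X) ^ 2 := by
      intro k _
      rw [map_add, map_pow, aeval_X, aeval_C, hCpx]
      rw [hy, div_pow, div_add' _ _ _ (pow_ne_zero 2 hXne)]
      congr 1
      simp only [map_sub, map_add, map_pow, map_one, map_mul]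
    rw [Finset.prod_congr rfl this, Finset.prod_div_distrib, Finset.prod_const,
      ← pow_mul]
    rfl
  have hdeg : Wc.natDegree < 2 * d + 1 := by rw [hWc0, Wc_natDegree, hd]; omega
  have step2 : aeval y Wc = ∑ j ∈ Finset.range (2 * d + 1), Wc.coeff j • y ^ j :=
    aeval_eq_sum_range' hdeg y
  have key : px (∏ k ∈ S, (((X : Polynomial ℂ) ^ 2 - 1) ^ 2 +
        C (((4 * Real.sin (Real.pi * k / n) ^ 2 : ℝ) : ℂ)) * X ^ 2)) =
      px (∑ j ∈ Finset.range (2 * d + 1),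
        C (Wc.coeff j) * (((X : Polynomial ℂ) ^ 2 - 1) ^ j * X ^ (2 * d - j))) := by
    rw [map_sum]
    have h1 : px (∏ k ∈ S, (((X : Polynomial ℂ) ^ 2 - 1) ^ 2 +
          C (((4 * Real.sin (Real.pi * k / n) ^ 2 : ℝ) : ℂ)) * X ^ 2)) =
        (∑ j ∈ Finset.range (2 * d + 1), Wc.coeff j • y ^ j) * (px X) ^ (2 * d) := by
      rw [← step2, step1, div_mul_cancel₀]
      exact pow_ne_zero _ hXne
    rw [h1, Finset.sum_mul]
    apply Finset.sum_congr rfl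
    intro j hj
    rw [Finset.mem_range] at hj
    have hsplit : (px X) ^ (2 * d) = (px X) ^ j * (px X) ^ (2 * d - j) := by
      rw [← pow_add]
      congr 1
      omega
    rw [smul_mul_assoc, hy, div_pow, hsplit, Algebra.smul_def, hCpx]
    rw [map_mul, map_mul, map_pow, map_pow]
    have hXj := pow_ne_zero j hXne
    rw [← mul_assoc (_ / _), div_mul_cancel₀ _ hXj]
  have hinj : Function.Injective px := RatFunc.algebraMap_injective ℂ
  have := hinj key
  rw [map_G_prod_factors n hn, ← hS, this]
lemma map_G_modp {p k : ℕ} (hp : p.Prime) (hk0 : 0 < k) (hn : 3 ≤ p ^ k) :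
    (Gpoly (p ^ k)).map (Int.castRingHom (ZMod p)) =
      ((X : Polynomial (ZMod p)) ^ 2 - 1) ^ ((p ^ k).totient) := by
  haveI : Fact p.Prime := ⟨hp⟩
  have hp1 : 2 ≤ p := hp.two_le
  have hq1 : 1 ≤ p ^ (k - 1) := Nat.one_le_pow _ _ (by omega)
  have hpk : p ^ k = p ^ (k - 1) * p := by
    rw [← pow_succ]
    congr 1
    omega
  have htot : (p ^ k).totient = p ^ k - p ^ (k - 1) := by
    rw [Nat.totient_prime_pow hp hk0, hpk, Nat.mul_sub, mul_one]
  rcases eq_or_ne p 2 with rfl | hodd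
  · have hk2 : 2 ≤ k := by
      by_contra hc
      interval_cases k <;> omega
    have hnotodd : ¬ Odd (2 ^ k) := by
      rw [← Nat.not_even_iff_odd]
      exact fun h => h (Nat.even_pow.mpr ⟨even_two, by omega⟩)
    rw [Gpoly, if_neg hnotodd, map_cyclotomic_int,
      show 2 * 2 ^ k = 2 ^ (k + 1) * 1 by ring,
      cyclotomic_mul_prime_pow_eq (ZMod 2) (by norm_num) (Nat.succ_pos k),
      cyclotomic_one, htot]
    have h2 : (2 : Polynomial (ZMod 2)) = 0 := by
      exact_mod_cast CharP.cast_eq_zero (Polynomial (ZMod 2)) 2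
    have hsq : ((X : Polynomial (ZMod 2)) ^ 2 - 1) = (X - 1) ^ 2 := by
      linear_combination (X - 1 : Polynomial (ZMod 2)) * h2
    rw [hsq, ← pow_mul]
    congr 1
    have e1 : 2 ^ (k + 1) - 2 ^ (k + 1 - 1) = 2 ^ k := by
      simp only [Nat.add_sub_cancel]
      have : 2 ^ (k + 1) = 2 ^ k * 2 := by rw [pow_succ]
      omega
    have e2 : 2 ^ k - 2 ^ (k - 1) = 2 ^ (k - 1) := by
      have : 2 ^ k = 2 ^ (k - 1) * 2 := by rw [← pow_succ]; congr 1; omega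
      omega
    rw [e1, e2, ← pow_succ']
    congr 1
    omega
  · have hoddn : Odd (p ^ k) := (hp.odd_of_ne_two hodd).pow
    have hnd2 : ¬ p ∣ 2 := by
      intro hd
      exact hodd ((Nat.prime_dvd_prime_iff_eq hp Nat.prime_two).mp hd)
    have hc1 : cyclotomic (p ^ k) (ZMod p) = (X - 1) ^ (p ^ k - p ^ (k - 1)) := by
      have h := cyclotomic_mul_prime_pow_eq (ZMod p) (p := p) (m := 1)
        (by rw [Nat.dvd_one]; omega) (by omega : 0 < k)
      rw [mul_one, cyclotomic_one] at h
      exact h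
    have hc2 : cyclotomic (2 * p ^ k) (ZMod p) = (X + 1) ^ (p ^ k - p ^ (k - 1)) := by
      have h := cyclotomic_mul_prime_pow_eq (ZMod p) (p := p) (m := 2) hnd2 (by omega : 0 < k)
      rw [cyclotomic_two] at h
      rw [show 2 * p ^ k = p ^ k * 2 by ring, h]
    rw [Gpoly, if_pos hoddn, Polynomial.map_mul, map_cyclotomic_int, map_cyclotomic_int,
      hc1, hc2, ← mul_pow, htot]
    congr 1
    ring
lemma coeff_dvd (n : ℕ) (hn : 3 ≤ n) (i : ℕ) :
    ((cyclotomic n ℤ).eval 1) ∣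
      (Gpoly n - ((X : Polynomial ℤ) ^ 2 - 1) ^ (n.totient)).coeff i := by
  by_cases hpp : IsPrimePow n
  · obtain ⟨p, k, hpprime, hk0, rfl⟩ := hpp
    have hp : p.Prime := Nat.prime_iff.mpr hpprime
    haveI : Fact p.Prime := ⟨hp⟩
    have hP : (cyclotomic (p ^ k) ℤ).eval 1 = (p : ℤ) := by
      have hkk : k = (k - 1) + 1 := by omega
      rw [hkk]
      exact eval_one_cyclotomic_prime_pow (k - 1)
    rw [hP]
    have hmap : ((Gpoly (p ^ k) - ((X : Polynomial ℤ) ^ 2 - 1) ^ ((p ^ k).totient)).map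
        (Int.castRingHom (ZMod p))) = 0 := by
      rw [Polynomial.map_sub, map_G_modp hp hk0 hn, Polynomial.map_pow, Polynomial.map_sub,
        Polynomial.map_pow, Polynomial.map_one, Polynomial.map_X, sub_self]
    have hco := congrArg (fun q => Polynomial.coeff q i) hmap
    simp only [Polynomial.coeff_map, Polynomial.coeff_zero] at hco
    exact_mod_cast (ZMod.intCast_zmod_eq_zero_iff_dvd _ p).mp hco
  · have hcond : ∀ {p : ℕ}, p.Prime → ∀ kk : ℕ, p ^ kk ≠ n := by
      intro p hp kk hkk
      rcases Nat.eq_zero_or_pos kk with rfl | hkk0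
      · simp only [pow_zero] at hkk; omega
      · exact hpp ⟨p, kk, Nat.prime_iff.mp hp, hkk0, hkk⟩
    rw [eval_one_cyclotomic_not_prime_pow hcond]
    exact one_dvd _

lemma coeff_int (n : ℕ) (hn : 3 ≤ n) :
    ∀ j0, j0 ≤ 2 * Sd n →
      ∃ z : ℤ, ((W n).map (algebraMap ℝ ℂ)).coeff j0 = (z : ℂ) ∧
        (0 < j0 → j0 < 2 * Sd n → ((cyclotomic n ℤ).eval 1) ∣ z) := by
  have h2d : 2 * Sd n = n.totient := card_S n hn
  suffices H : ∀ t, ∀ j0, 2 * Sd n - j0 = t → j0 ≤ 2 * Sd n →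
      ∃ z : ℤ, ((W n).map (algebraMap ℝ ℂ)).coeff j0 = (z : ℂ) ∧
        (0 < j0 → j0 < 2 * Sd n → ((cyclotomic n ℤ).eval 1) ∣ z) by
    exact fun j0 hj0 => H _ j0 rfl hj0
  intro t
  induction t using Nat.strong_induction_on with
  | _ t IH =>
  intro j0 ht hj0
  set d2 := 2 * Sd n with hd2
  set Wc := (W n).map (algebraMap ℝ ℂ) with hWc0
  rcases eq_or_lt_of_le hj0 with rfl | hj0lt
  · -- top coefficient
    refine ⟨1, ?_, by omega⟩
    have := (Wc_monic n).coeff_natDegree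
    rw [Wc_natDegree n] at this
    rw [this]
    norm_num
  -- middle/lower coefficient
  set κ : ℕ → ℤ :=
    fun j => ((((X : Polynomial ℤ) ^ 2 - 1) ^ j * X ^ (d2 - j)).coeff (d2 - j0)) with hκ
  have hcast : ∀ j : ℕ, ((X : Polynomial ℂ) ^ 2 - 1) ^ j * X ^ (d2 - j) =
      (((X : Polynomial ℤ) ^ 2 - 1) ^ j * X ^ (d2 - j)).map (Int.castRingHom ℂ) := by
    intro j
    simp only [Polynomial.map_mul, Polynomial.map_pow, Polynomial.map_sub, Polynomial.map_one,
      Polynomial.map_X]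
  have hGcoeff : (((Gpoly n).coeff (d2 - j0) : ℤ) : ℂ) =
      ∑ j ∈ Finset.range (d2 + 1), Wc.coeff j * ((κ j : ℤ) : ℂ) := by
    have hco := congrArg (fun q => Polynomial.coeff q (d2 - j0)) (G_eq_sum n hn)
    simp only [Polynomial.coeff_map, Polynomial.finset_sum_coeff, Polynomial.coeff_C_mul] at hco
    rw [show (((Gpoly n).coeff (d2 - j0) : ℤ) : ℂ) = ((Int.castRingHom ℂ) ((Gpoly n).coeff (d2 - j0))) from rfl, hco]
    apply Finset.sum_congr rfl
    intro j _
    congr 1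
    · exact (Polynomial.coeff_map _ _).symm
    · rw [hκ, hcast j, Polynomial.coeff_map]
      rfl
  have hκdiag : κ j0 = (-1) ^ j0 := by
    rw [hκ]
    simp only
    rw [Polynomial.coeff_mul_X_pow', if_pos (le_refl _), Nat.sub_self,
      Polynomial.coeff_zero_eq_eval_zero]
    simp
  have hκlow : ∀ j, j < j0 → κ j = 0 := by
    intro j hj
    rw [hκ]
    simp only
    rw [Polynomial.coeff_mul_X_pow', if_neg (by omega)]
  have hκtop : κ d2 = (((X : Polynomial ℤ) ^ 2 - 1) ^ (n.totient)).coeff (d2 - j0) := by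
    rw [hκ]
    simp only [Nat.sub_self, pow_zero, mul_one]
    have he : d2 = n.totient := h2d
    rw [he]
  -- choice function for higher coefficients
  have Hch : ∀ j : ℕ, ∃ z : ℤ, (j0 < j ∧ j ≤ d2) →
      (Wc.coeff j = (z : ℂ) ∧ (j < d2 → ((cyclotomic n ℤ).eval 1) ∣ z)) := by
    intro j
    by_cases hj : j0 < j ∧ j ≤ d2
    · obtain ⟨z, hz1, hz2⟩ := IH (d2 - j) (by omega) j rfl hj.2
      exact ⟨z, fun _ => ⟨hz1, fun hlt => hz2 (by omega) hlt⟩⟩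
    · exact ⟨0, fun hc => absurd hc hj⟩
  choose g hg using Hch
  have hj0mem : j0 ∈ Finset.range (d2 + 1) := Finset.mem_range.mpr (by omega)
  have htopmem : d2 ∈ (Finset.range (d2 + 1)).erase j0 :=
    Finset.mem_erase.mpr ⟨by omega, Finset.mem_range.mpr (by omega)⟩
  set T := ((Finset.range (d2 + 1)).erase j0).erase d2 with hT
  rw [← Finset.add_sum_erase _ _ hj0mem, ← Finset.add_sum_erase _ _ htopmem] at hGcoeff
  have hWtop : Wc.coeff d2 = 1 := by
    have := (Wc_monic n).coeff_natDegree
    rw [Wc_natDegree n] at this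
    exact this
  have hsumT : ∑ j ∈ T, Wc.coeff j * ((κ j : ℤ) : ℂ) =
      ∑ j ∈ T, ((g j : ℤ) : ℂ) * ((κ j : ℤ) : ℂ) := by
    apply Finset.sum_congr rfl
    intro j hjT
    rw [hT] at hjT
    simp only [Finset.mem_erase, Finset.mem_range] at hjT
    obtain ⟨hjne2, hjnej0, hjlt⟩ := hjT
    rcases lt_trichotomy j j0 with hc | rfl | hc
    · rw [hκlow j hc]
      push_cast
      ring
    · omega
    · rw [(hg j ⟨hc, by omega⟩).1]
  set Z : ℤ := (-1) ^ j0 * ((Gpoly n).coeff (d2 - j0) - κ d2 - ∑ j ∈ T, g j * κ j) with hZ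
  refine ⟨Z, ?_, ?_⟩
  · rw [hκdiag, hWtop, hsumT] at hGcoeff
    have hε : ((-1 : ℂ)) ^ j0 * ((-1 : ℂ)) ^ j0 = 1 := by
      rw [← pow_add, Even.neg_one_pow ⟨j0, rfl⟩]
    rw [hZ]
    push_cast
    push_cast at hGcoeff
    linear_combination (-((-1 : ℂ)) ^ j0) * hGcoeff + (-(Wc.coeff j0)) * hε
  · intro hpos hlt
    rw [hZ]
    apply Dvd.dvd.mul_left
    have h1 : ((cyclotomic n ℤ).eval 1) ∣ ((Gpoly n).coeff (d2 - j0) - κ d2) := by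
      have := coeff_dvd n hn (d2 - j0)
      rwa [Polynomial.coeff_sub, ← hκtop] at this
    have h2 : ((cyclotomic n ℤ).eval 1) ∣ ∑ j ∈ T, g j * κ j := by
      apply Finset.dvd_sum
      intro j hjT
      rw [hT] at hjT
      simp only [Finset.mem_erase, Finset.mem_range] at hjT
      obtain ⟨hjne2, hjnej0, hjlt⟩ := hjT
      rcases lt_trichotomy j j0 with hc | rfl | hc
      · rw [hκlow j hc, mul_zero]
        exact dvd_zero _
      · omega
      · exact Dvd.dvd.mul_right ((hg j ⟨hc, by omega⟩).2 (by omega)) _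
    exact dvd_sub h1 h2

/-- For `n ≥ 3` and `1 ≤ m < φ(n)/2`, the number `(2B_{2m}/(2m)!) ω_m(n)` is an
integer. -/
theorem two_bernoulli_omega_int (n m : ℕ) (hn : 3 ≤ n) (hm : 1 ≤ m)
    (h : 2 * m < Nat.totient n) :
    ∃ z : ℤ, ((2 * _root_.bernoulli (2 * m) / ((2 * m).factorial : ℚ) : ℚ) : ℝ) * omegaAK n m = z := by
  have h2d : 2 * Sd n = n.totient := card_S n hn
  obtain ⟨z, hz1, hz2⟩ := coeff_int n hn (2 * m) (by omega)
  have hzdvd : (cyclotomic n ℤ).eval 1 ∣ z := hz2 (by omega) (by omega)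
  obtain ⟨z', rfl⟩ := hzdvd
  set P : ℤ := (cyclotomic n ℤ).eval 1 with hP0
  have hPpos : 0 < P := cyclotomic_pos (by omega : 2 < n) 1
  have hcoeffR : (W n).coeff (2 * m) = ((P * z' : ℤ) : ℝ) := by
    apply Complex.ofReal_injective
    have hcm : ((W n).map (algebraMap ℝ ℂ)).coeff (2 * m) = ((W n).coeff (2 * m) : ℂ) := by
      simp [Polynomial.coeff_map]
    rw [← hcm, hz1]
    norm_num
  have hevalR : (cyclotomic n ℝ).eval 1 = ((P : ℤ) : ℝ) := by
    rw [← map_cyclotomic_int n ℝ, Polynomial.eval_one_map]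
    rfl
  refine ⟨z', ?_⟩
  rw [omegaAK, ← mul_assoc, ← Rat.cast_mul]
  have hBne : (_root_.bernoulli (2 * m) : ℚ) ≠ 0 := bern_ne_zero m hm
  have hfne : (((2 * m).factorial : ℚ)) ≠ 0 := Nat.cast_ne_zero.mpr (Nat.factorial_ne_zero _)
  have hq : (2 * _root_.bernoulli (2 * m) / ((2 * m).factorial : ℚ) : ℚ) *
      (((2 * m).factorial : ℚ) / (2 * _root_.bernoulli (2 * m))) = 1 := by
    field_simp
  rw [hq, Rat.cast_one, one_mul, hcoeffR, hevalR]
  have hPne : ((P : ℤ) : ℝ) ≠ 0 := Int.cast_ne_zero.mpr (by omega)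
  push_cast
  field_simp
end

section
/- For every integer n ≥ 3 and every integer k ≥ 2 with 2k+1 < φ(n), the integer Φ_n^{(2k+1)}(1)/Φ_n(1) is divisible by φ(n) − 2k; moreover for k = 1 (with 3 < φ(n)), 2Φ_n^{(3)}(1)/Φ_n(1) is divisible by φ(n) − 2. -/
open Polynomial Finset

namespace AKAux

/-- Cast of `Nat.descFactorial` as a product of integer terms. -/
lemma cast_descFactorial (i m : ℕ) :
    (i.descFactorial m : ℤ) = ∏ j ∈ Finset.range m, ((i : ℤ) - j) := by
  rcases lt_or_ge i m with h | h
  · rw [Nat.descFactorial_eq_zero_iff_lt.mpr h, Nat.cast_zero, eq_comm]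
    exact Finset.prod_eq_zero (Finset.mem_range.mpr h) (by simp)
  · rw [Nat.descFactorial_eq_prod_range, Nat.cast_prod]
    refine Finset.prod_congr rfl fun j hj => ?_
    have hji : j ≤ i := le_trans (Nat.le_of_lt_succ (by
      have := Finset.mem_range.mp hj; omega)) le_rfl
    push_cast [Nat.cast_sub hji]
    ring

/-- Quadratic remainder expansion of a polynomial evaluation. -/
lemma eval_quad (q : ℤ[X]) (M : ℤ) :
    q.eval M = q.coeff 0 + q.coeff 1 * M + M ^ 2 * (q.divX.divX.eval M) := by
  have h1 : q.eval M = M * q.divX.eval M + q.coeff 0 := by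
    conv_lhs => rw [← Polynomial.X_mul_divX_add q]
    simp
  have h2 : q.divX.eval M = M * q.divX.divX.eval M + q.coeff 1 := by
    conv_lhs => rw [← Polynomial.X_mul_divX_add q.divX]
    simp [Polynomial.coeff_divX]
  rw [h1, h2]; ring

lemma eval_one_hasseDeriv (f : ℤ[X]) (m N : ℕ) (hN : f.natDegree < N) :
    (Polynomial.hasseDeriv m f).eval 1
      = ∑ i ∈ Finset.range N, f.coeff i * (i.choose m : ℤ) := by
  have hdeg : (Polynomial.hasseDeriv m f).natDegree < N :=
    lt_of_le_of_lt (le_trans (Polynomial.natDegree_hasseDeriv_le f m) (Nat.sub_le _ _)) hN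
  rw [Polynomial.eval_eq_sum_range' hdeg]
  simp only [one_pow, mul_one, Polynomial.hasseDeriv_coeff]
  have split1 : ∑ i ∈ Finset.range (m + N), f.coeff i * (i.choose m : ℤ)
      = ∑ i ∈ Finset.range N, ((i + m).choose m : ℤ) * f.coeff (i + m) := by
    rw [Finset.sum_range_add]
    have h0 : ∑ i ∈ Finset.range m, f.coeff i * (i.choose m : ℤ) = 0 :=
      Finset.sum_eq_zero fun i hi => by
        rw [Nat.choose_eq_zero_of_lt (Finset.mem_range.mp hi), Nat.cast_zero, mul_zero]
    rw [h0, zero_add]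
    exact Finset.sum_congr rfl fun i _ => by rw [add_comm m i]; ring
  have split2 : ∑ i ∈ Finset.range (N + m), f.coeff i * (i.choose m : ℤ)
      = ∑ i ∈ Finset.range N, f.coeff i * (i.choose m : ℤ) := by
    rw [Finset.sum_range_add]
    have h0 : ∑ i ∈ Finset.range m, f.coeff (N + i) * ((N + i).choose m : ℤ) = 0 :=
      Finset.sum_eq_zero fun i hi => by
        rw [Polynomial.coeff_eq_zero_of_natDegree_lt (by omega), zero_mul]
    rw [h0, add_zero]
  rw [← split1, add_comm m N, split2]

lemma eval_one_iterate_derivative (f : ℤ[X]) (m N : ℕ) (hN : f.natDegree < N) :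
    (Polynomial.derivative^[m] f).eval 1
      = (Nat.factorial m : ℤ) * ∑ i ∈ Finset.range N, f.coeff i * (i.choose m : ℤ) := by
  have h1 : Polynomial.derivative^[m] f = Nat.factorial m • Polynomial.hasseDeriv m f := by
    rw [← Polynomial.factorial_smul_hasseDeriv (R := ℤ) (k := m)]
    rfl
  rw [h1, nsmul_eq_mul]
  have h2 : ((Nat.factorial m : ℤ[X]) * Polynomial.hasseDeriv m f).eval 1
      = (Nat.factorial m : ℤ) * (Polynomial.hasseDeriv m f).eval 1 := by simp
  rw [h2, eval_one_hasseDeriv f m N hN]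

/-- The descending-factorial product. -/
def Dprod (m x : ℕ) : ℤ := ∏ j ∈ Finset.range m, ((x : ℤ) - j)

lemma eval_one_iterate_derivative' (f : ℤ[X]) (m N : ℕ) (hN : f.natDegree < N) :
    (Polynomial.derivative^[m] f).eval 1
      = ∑ i ∈ Finset.range N, f.coeff i * Dprod m i := by
  rw [eval_one_iterate_derivative f m N hN, Finset.mul_sum]
  refine Finset.sum_congr rfl fun i _ => ?_
  rw [Dprod, ← cast_descFactorial, Nat.descFactorial_eq_factorial_mul_choose]
  push_cast
  ring

lemma reverse_prod {ι : Type*} (s : Finset ι) (f : ι → ℤ[X]) :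
    (∏ i ∈ s, f i).reverse = ∏ i ∈ s, (f i).reverse := by
  induction s using Finset.cons_induction with
  | empty => simp [Polynomial.reverse]
  | cons a s ha ih =>
      rw [Finset.prod_cons, Finset.prod_cons, Polynomial.reverse_mul_of_domain, ih]

lemma reverse_X_pow_sub_one (n : ℕ) (hn : 0 < n) :
    (X ^ n - 1 : ℤ[X]).reverse = 1 - X ^ n := by
  have hd : (X ^ n - 1 : ℤ[X]).natDegree = n := by
    simpa using Polynomial.natDegree_X_pow_sub_C (n := n) (r := (1 : ℤ))
  rw [Polynomial.reverse, hd]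
  have h1 : (1 : ℤ[X]) = X ^ 0 := by simp
  rw [Polynomial.reflect_sub, h1, Polynomial.reflect_monomial, Polynomial.reflect_monomial,
    Polynomial.revAt_le (le_refl n), Polynomial.revAt_le (Nat.zero_le n)]
  simp

lemma reverse_cyclotomic : ∀ n : ℕ, 2 ≤ n → (cyclotomic n ℤ).reverse = cyclotomic n ℤ := by
  intro n
  induction n using Nat.strong_induction_on with
  | _ n ih =>
    intro hn
    have hn0 : 0 < n := by omega
    set T : ℤ[X] := ∏ i ∈ n.properDivisors, cyclotomic i ℤ with hT
    have hTne : T ≠ 0 := by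
      rw [hT]
      exact Finset.prod_ne_zero_iff.mpr fun i _ => cyclotomic_ne_zero i ℤ
    have hprod : cyclotomic n ℤ * T = X ^ n - 1 := by
      have hfull := prod_cyclotomic_eq_X_pow_sub_one hn0 ℤ
      rw [← Nat.cons_self_properDivisors hn0.ne',
        Finset.prod_cons (Nat.self_notMem_properDivisors (n := n))] at hfull
      exact hfull
    have h1mem : (1 : ℕ) ∈ n.properDivisors :=
      Nat.one_mem_properDivisors_iff_one_lt.mpr (by omega)
    have hrevT : T.reverse = -T := by
      have hsplit : T = (∏ i ∈ n.properDivisors.erase 1, cyclotomic i ℤ) * cyclotomic 1 ℤ :=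
        (Finset.prod_erase_mul _ _ h1mem).symm
      have hmid : ∀ i ∈ n.properDivisors.erase 1, (cyclotomic i ℤ).reverse = cyclotomic i ℤ := by
        intro i hi
        obtain ⟨hi1, hip⟩ := Finset.mem_erase.mp hi
        have hpos : 0 < i := Nat.pos_of_mem_properDivisors hip
        exact ih i (Nat.mem_properDivisors.mp hip).2 (by omega)
      have hrev1 : (cyclotomic 1 ℤ).reverse = -(cyclotomic 1 ℤ) := by
        rw [cyclotomic_one]
        have : (X - 1 : ℤ[X]) = X ^ 1 - 1 := by ring
        rw [this, reverse_X_pow_sub_one 1 one_pos]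
        ring
      rw [hsplit, Polynomial.reverse_mul_of_domain, reverse_prod,
        Finset.prod_congr rfl hmid, hrev1]
      ring
    have hrev := congrArg Polynomial.reverse hprod
    rw [Polynomial.reverse_mul_of_domain, hrevT, reverse_X_pow_sub_one n hn0] at hrev
    have heq : (cyclotomic n ℤ).reverse * T = cyclotomic n ℤ * T := by
      linear_combination -hrev - hprod
    exact mul_right_cancel₀ hTne heq

lemma cyclotomic_coeff_symm {n : ℕ} (hn : 2 ≤ n) {i : ℕ}
    (hi : i ≤ (cyclotomic n ℤ).natDegree) :
    (cyclotomic n ℤ).coeff ((cyclotomic n ℤ).natDegree - i) = (cyclotomic n ℤ).coeff i := by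
  conv_rhs => rw [← reverse_cyclotomic n hn, Polynomial.coeff_reverse,
    Polynomial.revAt_le hi]

/-- The auxiliary polynomial whose evaluation at `M` recovers the reflected
descending factorial. -/
noncomputable def qpoly (k i : ℕ) : ℤ[X] :=
  ∏ j ∈ Finset.range (2 * k + 1), (X + C ((2 * k : ℤ) - i - j))

lemma qpoly_eval (k i Mn d : ℕ) (hd : d = 2 * k + Mn) (hi : i ≤ d) :
    (qpoly k i).eval (Mn : ℤ) = Dprod (2 * k + 1) (d - i) := by
  rw [qpoly, Polynomial.eval_prod, Dprod]
  refine Finset.prod_congr rfl fun j hj => ?_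
  simp only [eval_add, eval_X, eval_C]
  rw [Nat.cast_sub hi, hd]
  push_cast
  ring

lemma qpoly_coeff_zero (k i : ℕ) : (qpoly k i).coeff 0 = - Dprod (2 * k + 1) i := by
  rw [Polynomial.coeff_zero_eq_eval_zero, qpoly, Polynomial.eval_prod]
  simp only [eval_add, eval_X, eval_C, zero_add]
  have h1 : ∏ j ∈ Finset.range (2 * k + 1), ((2 * k : ℤ) - i - j)
      = ∏ j ∈ Finset.range (2 * k + 1), ((j : ℤ) - i) := by
    rw [← Finset.prod_range_reflect (fun j => ((j : ℤ) - i)) (2 * k + 1)]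
    refine Finset.prod_congr rfl fun j hj => ?_
    have hj' : j ≤ 2 * k := by have := Finset.mem_range.mp hj; omega
    have : 2 * k + 1 - 1 - j = 2 * k - j := by omega
    rw [this, Nat.cast_sub hj']
    push_cast
    ring
  rw [h1, Dprod]
  have h2 : ∏ j ∈ Finset.range (2 * k + 1), ((j : ℤ) - i)
      = ∏ j ∈ Finset.range (2 * k + 1), (-1 * ((i : ℤ) - j)) :=
    Finset.prod_congr rfl fun j _ => by ring
  rw [h2, Finset.prod_mul_distrib, Finset.prod_const, Finset.card_range]
  have : (-1 : ℤ) ^ (2 * k + 1) = -1 := Odd.neg_one_pow ⟨k, by ring⟩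
  rw [this]
  ring

lemma qpoly_coeff_one_even (k i : ℕ) (hk : 2 ≤ k) : (2 : ℤ) ∣ (qpoly k i).coeff 1 := by
  rw [qpoly, Finset.prod_X_add_C_coeff _ _ (by rw [Finset.card_range]; omega)]
  refine Finset.dvd_sum fun t ht => ?_
  rw [Finset.mem_powersetCard, Finset.card_range] at ht
  obtain ⟨hts, htc⟩ := ht
  set j1 := (2 * k + i) % 2 with hj1
  have hj1lt : j1 < 2 * k + 1 := by omega
  have hj2lt : j1 + 2 < 2 * k + 1 := by omega
  have hmem : j1 ∈ t ∨ j1 + 2 ∈ t := by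
    by_contra h
    push_neg at h
    have hsub : t ⊆ ((Finset.range (2 * k + 1)).erase j1).erase (j1 + 2) := by
      intro x hx
      rw [Finset.mem_erase, Finset.mem_erase]
      exact ⟨fun hx2 => h.2 (hx2 ▸ hx), fun hx1 => h.1 (hx1 ▸ hx), hts hx⟩
    have hcard := Finset.card_le_card hsub
    rw [Finset.card_erase_of_mem (by
        rw [Finset.mem_erase, Finset.mem_range]; exact ⟨by omega, hj2lt⟩),
      Finset.card_erase_of_mem (Finset.mem_range.mpr hj1lt), Finset.card_range] at hcard
    omega
  have heven : ∀ j : ℕ, j % 2 = (2 * k + i) % 2 → (2 : ℤ) ∣ ((2 * k : ℤ) - i - j) := by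
    intro j hj
    omega
  rcases hmem with h | h
  · exact dvd_trans (heven j1 (by omega)) (Finset.dvd_prod_of_mem _ h)
  · exact dvd_trans (heven (j1 + 2) (by omega)) (Finset.dvd_prod_of_mem _ h)

/-- Master symmetry identity: `2·Φ_n^{(2k+1)}(1) = M·W + M²·V` with `W` even if `k ≥ 2`,
where `M = φ(n) − 2k`. -/
lemma two_eval_eq (n k : ℕ) (hn : 3 ≤ n) (hk : 1 ≤ k) (hm : 2 * k + 1 < Nat.totient n) :
    ∃ W V : ℤ,
      2 * (Polynomial.derivative^[2 * k + 1] (cyclotomic n ℤ)).eval 1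
        = ((Nat.totient n - 2 * k : ℕ) : ℤ) * W + ((Nat.totient n - 2 * k : ℕ) : ℤ) ^ 2 * V
      ∧ (2 ≤ k → (2 : ℤ) ∣ W) := by
  set f := cyclotomic n ℤ with hf
  set d := Nat.totient n with hdd
  have hdeg : f.natDegree = d := natDegree_cyclotomic n ℤ
  set Mn := d - 2 * k with hMn
  have hdMn : d = 2 * k + Mn := by omega
  set m := 2 * k + 1 with hmm
  have hA : (Polynomial.derivative^[m] f).eval 1
      = ∑ i ∈ Finset.range (d + 1), f.coeff i * Dprod m i :=
    eval_one_iterate_derivative' f m (d + 1) (by omega)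
  have hA' : (Polynomial.derivative^[m] f).eval 1
      = ∑ i ∈ Finset.range (d + 1), f.coeff i * Dprod m (d - i) := by
    rw [hA, ← Finset.sum_range_reflect (fun i => f.coeff i * Dprod m (d - i)) (d + 1)]
    refine Finset.sum_congr rfl fun i hi => ?_
    have hi' : i ≤ d := by have := Finset.mem_range.mp hi; omega
    have e1 : d + 1 - 1 - i = d - i := by omega
    have e2 : d - (d - i) = i := by omega
    rw [e1, e2]
    congr 1
    have := cyclotomic_coeff_symm (n := n) (by omega) (i := i) (by rw [hdeg]; exact hi')
    rw [hdeg] at this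
    rw [this]
  refine ⟨∑ i ∈ Finset.range (d + 1), f.coeff i * (qpoly k i).coeff 1,
    ∑ i ∈ Finset.range (d + 1), f.coeff i * ((qpoly k i).divX.divX.eval (Mn : ℤ)), ?_, ?_⟩
  · rw [two_mul]
    nth_rewrite 1 [hA]
    nth_rewrite 1 [hA']
    rw [← Finset.sum_add_distrib, Finset.mul_sum, Finset.mul_sum, ← Finset.sum_add_distrib]
    refine Finset.sum_congr rfl fun i hi => ?_
    have hi' : i ≤ d := by have := Finset.mem_range.mp hi; omega
    have hq := qpoly_eval k i Mn d hdMn hi'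
    rw [← hq, eval_quad (qpoly k i) (Mn : ℤ), qpoly_coeff_zero]
    ring
  · intro hk2
    exact Finset.dvd_sum fun i _ => Dvd.dvd.mul_left (qpoly_coeff_one_even k i hk2) _

lemma cyclotomic_zmod_prime_pow (p : ℕ) (hp : p.Prime) (e : ℕ) (he : 1 ≤ e) :
    cyclotomic (p ^ e) (ZMod p) = (X - 1) ^ (Nat.totient (p ^ e)) := by
  haveI := Fact.mk hp
  obtain ⟨e', rfl⟩ : ∃ e', e = e' + 1 := ⟨e - 1, by omega⟩
  have key := cyclotomic_prime_pow_mul_X_pow_sub_one (ZMod p) p e'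
  have hfrob : ∀ j : ℕ, (X - 1 : (ZMod p)[X]) ^ (p ^ j) = X ^ (p ^ j) - 1 := by
    intro j
    have := sub_pow_char_pow (R := (ZMod p)[X]) (p := p) (n := j) (x := X) (y := 1)
    simpa using this
  rw [← hfrob, ← hfrob] at key
  have hXne : (X - 1 : (ZMod p)[X]) ^ (p ^ e') ≠ 0 := by
    apply pow_ne_zero
    have : (X - 1 : (ZMod p)[X]) = X - C 1 := by simp
    rw [this]
    exact Polynomial.X_sub_C_ne_zero 1
  apply mul_right_cancel₀ hXne
  rw [key, ← pow_add]
  congr 1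
  rw [Nat.totient_prime_pow hp (by omega)]
  have h1 : e' + 1 - 1 = e' := by omega
  rw [h1, pow_succ]
  have h2 : p ^ e' * (p - 1) + p ^ e' = p ^ e' * ((p - 1) + 1) := by ring
  rw [h2, Nat.sub_add_cancel hp.one_le]

lemma prime_dvd_B (p e : ℕ) (hp : p.Prime) (he : 1 ≤ e) (m : ℕ)
    (hm : m < Nat.totient (p ^ e)) :
    (p : ℤ) ∣ ∑ i ∈ Finset.range (Nat.totient (p ^ e) + 1),
      (cyclotomic (p ^ e) ℤ).coeff i * (i.choose m : ℤ) := by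
  haveI := Fact.mk hp
  set f := cyclotomic (p ^ e) ℤ with hf
  set d := Nat.totient (p ^ e) with hd
  have hdeg : f.natDegree = d := natDegree_cyclotomic (p ^ e) ℤ
  have hB : ∑ i ∈ Finset.range (d + 1), f.coeff i * (i.choose m : ℤ)
      = (Polynomial.taylor 1 f).coeff m := by
    rw [Polynomial.taylor_coeff, eval_one_hasseDeriv f m (d + 1) (by omega)]
  rw [hB, ← ZMod.intCast_zmod_eq_zero_iff_dvd]
  have hmap : ((Polynomial.taylor 1 f).coeff m : ZMod p)
      = ((Polynomial.taylor 1 f).map (Int.castRingHom (ZMod p))).coeff m := by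
    rw [Polynomial.coeff_map]
    rfl
  rw [hmap, Polynomial.taylor_apply, Polynomial.map_comp]
  have hcyc : f.map (Int.castRingHom (ZMod p)) = (X - 1 : (ZMod p)[X]) ^ d := by
    rw [hf, map_cyclotomic_int, cyclotomic_zmod_prime_pow p hp e he, hd]
  have hX1 : (X + C (1 : ℤ)).map (Int.castRingHom (ZMod p)) = X + C 1 := by
    simp
  rw [hcyc, hX1]
  have hcomp : ((X - 1 : (ZMod p)[X]) ^ d).comp (X + C 1) = X ^ d := by
    rw [Polynomial.pow_comp, Polynomial.sub_comp, Polynomial.X_comp, Polynomial.one_comp]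
    simp
  rw [hcomp, Polynomial.coeff_X_pow, if_neg (by omega)]

lemma prime_pow_dvd_A (p e : ℕ) (hp : p.Prime) (he : 1 ≤ e) (m : ℕ)
    (hm : m < Nat.totient (p ^ e)) (a : ℕ) (ha : p ^ a ∣ Nat.factorial m) :
    (p : ℤ) ^ (a + 1) ∣ (Polynomial.derivative^[m] (cyclotomic (p ^ e) ℤ)).eval 1 := by
  rw [eval_one_iterate_derivative (cyclotomic (p ^ e) ℤ) m (Nat.totient (p ^ e) + 1)
    (by rw [natDegree_cyclotomic]; omega)]
  rw [pow_succ]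
  exact mul_dvd_mul (by exact_mod_cast ha) (prime_dvd_B p e hp he m hm)

end AKAux

open AKAux

/-- Akiyama–Kaneko congruences: for `n ≥ 3` and `k ≥ 2` with `2k+1 < φ(n)`, the
integer `Φ_n^{(2k+1)}(1)/Φ_n(1)` is divisible by `φ(n) − 2k`; and for `k = 1`
(with `3 < φ(n)`), `2Φ_n^{(3)}(1)/Φ_n(1)` is divisible by `φ(n) − 2`. -/
theorem akiyama_kaneko_congruences (n : ℕ) (hn : 3 ≤ n) :
    (∀ k : ℕ, 2 ≤ k → 2 * k + 1 < Nat.totient n →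
      ∃ z : ℤ, (Polynomial.derivative^[2 * k + 1] (cyclotomic n ℤ)).eval 1 =
        (cyclotomic n ℤ).eval 1 * (((Nat.totient n : ℤ) - 2 * k) * z)) ∧
    (3 < Nat.totient n →
      ∃ z : ℤ, 2 * (Polynomial.derivative^[3] (cyclotomic n ℤ)).eval 1 =
        (cyclotomic n ℤ).eval 1 * (((Nat.totient n : ℤ) - 2) * z)) := by
  have heven : 2 ∣ Nat.totient n := by
    obtain ⟨t, ht⟩ := Nat.totient_even (show 2 < n by omega)
    exact ⟨t, by omega⟩
  constructor
  · -- k ≥ 2 case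
    intro k hk hlt
    obtain ⟨W, V, hWV, hWe⟩ := two_eval_eq n k hn (by omega) hlt
    obtain ⟨W', hW'⟩ := hWe hk
    obtain ⟨M1, hM1⟩ : 2 ∣ (Nat.totient n - 2 * k) := by omega
    have hMcast : ((Nat.totient n - 2 * k : ℕ) : ℤ) = (Nat.totient n : ℤ) - 2 * k := by
      rw [Nat.cast_sub (by omega)]; push_cast; ring
    have hAfac : (Polynomial.derivative^[2 * k + 1] (cyclotomic n ℤ)).eval 1
        = ((Nat.totient n - 2 * k : ℕ) : ℤ) * (W' + (M1 : ℤ) * V) := by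
      have hM1' : ((Nat.totient n - 2 * k : ℕ) : ℤ) = 2 * (M1 : ℤ) := by exact_mod_cast hM1
      have h2 : 2 * ((Polynomial.derivative^[2 * k + 1] (cyclotomic n ℤ)).eval 1)
          = 2 * (((Nat.totient n - 2 * k : ℕ) : ℤ) * (W' + (M1 : ℤ) * V)) := by
        rw [hWV, hW', hM1']; ring
      exact mul_left_cancel₀ two_ne_zero h2
    by_cases hpp : IsPrimePow n
    · obtain ⟨p, e, hpp', he, rfl⟩ := hpp
      have hp : p.Prime := Nat.prime_iff.mpr hpp'
      haveI := Fact.mk hp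
      have heval1 : (cyclotomic (p ^ e) ℤ).eval 1 = (p : ℤ) := by
        obtain ⟨e', rfl⟩ : ∃ e', e = e' + 1 := ⟨e - 1, by omega⟩
        exact eval_one_cyclotomic_prime_pow e'
      have hkey : ((p * (Nat.totient (p ^ e) - 2 * k) : ℕ) : ℤ)
          ∣ (Polynomial.derivative^[2 * k + 1] (cyclotomic (p ^ e) ℤ)).eval 1 := by
        have hMn0 : Nat.totient (p ^ e) - 2 * k ≠ 0 := by omega
        set Mn := Nat.totient (p ^ e) - 2 * k with hMn
        set a := Mn.factorization p with ha
        have h1 : p ^ a ∣ Mn := Nat.ordProj_dvd Mn p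
        have h2 : p ^ a ≤ Mn := Nat.le_of_dvd (by omega) h1
        have h3 : Nat.totient (p ^ e) < p ^ e := Nat.totient_lt _ (by omega)
        have h4 : a < e := by
          by_contra hae
          push_neg at hae
          have := Nat.pow_le_pow_right hp.one_lt.le hae
          omega
        have h5 : p ^ a ∣ Nat.totient (p ^ e) := by
          rw [Nat.totient_prime_pow hp (by omega)]
          exact dvd_mul_of_dvd_left (pow_dvd_pow p (by omega)) _
        have h6 : p ^ a ∣ 2 * k := by
          have h7 : 2 * k = Nat.totient (p ^ e) - Mn := by omega
          rw [h7]; exact Nat.dvd_sub h5 h1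
        have h8 : p ^ a ∣ Nat.factorial (2 * k + 1) :=
          Nat.dvd_factorial (Nat.pow_pos (n := a) hp.pos)
            (by have := Nat.le_of_dvd (by omega) h6; omega)
        have h9 : (p : ℤ) ^ (a + 1)
            ∣ (Polynomial.derivative^[2 * k + 1] (cyclotomic (p ^ e) ℤ)).eval 1 :=
          prime_pow_dvd_A p e hp (by omega) (2 * k + 1) hlt a h8
        have hMnA : ((Mn : ℕ) : ℤ)
            ∣ (Polynomial.derivative^[2 * k + 1] (cyclotomic (p ^ e) ℤ)).eval 1 :=
          ⟨_, hAfac⟩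
        have h10 : ((Mn / p ^ a : ℕ) : ℤ)
            ∣ (Polynomial.derivative^[2 * k + 1] (cyclotomic (p ^ e) ℤ)).eval 1 :=
          dvd_trans (by exact_mod_cast Nat.ordCompl_dvd Mn p) hMnA
        have h9' : ((p ^ (a + 1) : ℕ) : ℤ)
            ∣ (Polynomial.derivative^[2 * k + 1] (cyclotomic (p ^ e) ℤ)).eval 1 := by
          exact_mod_cast h9
        have h11 : IsCoprime ((p ^ (a + 1) : ℕ) : ℤ) ((Mn / p ^ a : ℕ) : ℤ) :=
          Nat.isCoprime_iff_coprime.mpr ((Nat.coprime_ordCompl hp hMn0).pow_left (a + 1))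
        have h12 := h11.mul_dvd h9' h10
        have hself : p ^ a * (Mn / p ^ a) = Mn := Nat.ordProj_mul_ordCompl_eq_self Mn p
        have h13 : p * Mn = p ^ (a + 1) * (Mn / p ^ a) := by
          conv_lhs => rw [← hself]
          rw [pow_succ]; ring
        rw [h13, Nat.cast_mul]
        exact h12
      obtain ⟨z, hz⟩ := hkey
      refine ⟨z, ?_⟩
      rw [hz, heval1, ← hMcast]
      push_cast
      ring
    · have heval1 : (cyclotomic n ℤ).eval 1 = 1 := by
        apply eval_one_cyclotomic_not_prime_pow
        intro p hp i hpi
        rcases Nat.eq_zero_or_pos i with hi | hi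
        · subst hi; simp at hpi; omega
        · exact hpp ⟨p, i, Nat.prime_iff.mp hp, hi, hpi⟩
      refine ⟨W' + (M1 : ℤ) * V, ?_⟩
      rw [heval1, one_mul, ← hMcast]
      exact hAfac
  · -- k = 1 case
    intro hlt3
    obtain ⟨W, V, hWV, -⟩ := two_eval_eq n 1 hn le_rfl (by omega)
    simp only [show 2 * 1 + 1 = 3 by norm_num, show 2 * 1 = 2 by norm_num] at hWV
    have hMcast : ((Nat.totient n - 2 : ℕ) : ℤ) = (Nat.totient n : ℤ) - 2 := by
      rw [Nat.cast_sub (by omega)]; norm_num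
    have h2A : 2 * (Polynomial.derivative^[3] (cyclotomic n ℤ)).eval 1
        = ((Nat.totient n - 2 : ℕ) : ℤ) * (W + ((Nat.totient n - 2 : ℕ) : ℤ) * V) := by
      rw [hWV]; ring
    by_cases hpp : IsPrimePow n
    · obtain ⟨p, e, hpp', he, rfl⟩ := hpp
      have hp : p.Prime := Nat.prime_iff.mpr hpp'
      haveI := Fact.mk hp
      have heval1 : (cyclotomic (p ^ e) ℤ).eval 1 = (p : ℤ) := by
        obtain ⟨e', rfl⟩ : ∃ e', e = e' + 1 := ⟨e - 1, by omega⟩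
        exact eval_one_cyclotomic_prime_pow e'
      have hdvd2A : ((Nat.totient (p ^ e) - 2 : ℕ) : ℤ)
          ∣ 2 * (Polynomial.derivative^[3] (cyclotomic (p ^ e) ℤ)).eval 1 := ⟨_, h2A⟩
      have hAB := eval_one_iterate_derivative (cyclotomic (p ^ e) ℤ) 3
        (Nat.totient (p ^ e) + 1) (by rw [natDegree_cyclotomic]; omega)
      have hpB := prime_dvd_B p e hp (by omega) 3 (by omega)
      by_cases hp2 : p = 2
      · subst hp2
        have hdval : Nat.totient (2 ^ e) = 2 ^ (e - 1) := by
          rw [Nat.totient_prime_pow Nat.prime_two (by omega)]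
          norm_num
        have he3 : 3 ≤ e := by
          by_contra hcon
          push_neg at hcon
          have hle : 2 ^ (e - 1) ≤ 2 ^ 1 := Nat.pow_le_pow_right (by norm_num) (by omega)
          omega
        have hsplit2 : 2 ^ (e - 2) = 2 * 2 ^ (e - 3) := by
          rw [← pow_succ']; congr 1; omega
        have hsplit1 : 2 ^ (e - 1) = 2 * 2 ^ (e - 2) := by
          rw [← pow_succ']; congr 1; omega
        have hMn2 : Nat.totient (2 ^ e) - 2 = 2 * (2 ^ (e - 2) - 1) := by omega
        have hM0odd : Odd (2 ^ (e - 2) - 1) := by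
          refine ⟨2 ^ (e - 3) - 1, by omega⟩
        have h4dvd : ((4 : ℕ) : ℤ)
            ∣ 2 * (Polynomial.derivative^[3] (cyclotomic (2 ^ e) ℤ)).eval 1 := by
          rw [hAB]
          have h6' : (Nat.factorial 3 : ℤ) = 6 := by norm_num [Nat.factorial]
          rw [h6']
          exact ⟨3 * ∑ i ∈ Finset.range (Nat.totient (2 ^ e) + 1),
            (cyclotomic (2 ^ e) ℤ).coeff i * (i.choose 3 : ℤ), by push_cast; ring⟩
        have hM0dvdnat : (2 ^ (e - 2) - 1) ∣ (Nat.totient (2 ^ e) - 2) := ⟨2, by omega⟩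
        have hM0dvd : ((2 ^ (e - 2) - 1 : ℕ) : ℤ)
            ∣ 2 * (Polynomial.derivative^[3] (cyclotomic (2 ^ e) ℤ)).eval 1 :=
          dvd_trans (Int.natCast_dvd_natCast.mpr hM0dvdnat) hdvd2A
        have hcop : IsCoprime ((4 : ℕ) : ℤ) ((2 ^ (e - 2) - 1 : ℕ) : ℤ) := by
          refine Nat.isCoprime_iff_coprime.mpr ?_
          have hc2 : Nat.Coprime 2 (2 ^ (e - 2) - 1) := Nat.coprime_two_left.mpr hM0odd
          have hc4 := hc2.pow_left 2
          norm_num at hc4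
          exact hc4
        have hfin := hcop.mul_dvd h4dvd hM0dvd
        have hid : ((4 : ℕ) : ℤ) * ((2 ^ (e - 2) - 1 : ℕ) : ℤ)
            = 2 * ((Nat.totient (2 ^ e) - 2 : ℕ) : ℤ) := by
          rw [hMn2]; push_cast; ring
        rw [hid] at hfin
        obtain ⟨z, hz⟩ := hfin
        refine ⟨z, ?_⟩
        rw [hz, heval1, ← hMcast]
        push_cast
        ring
      · -- p odd prime power
        have hpnd : ¬ (p ∣ Nat.totient (p ^ e) - 2) := by
          intro hdvd
          rcases Nat.lt_or_ge e 2 with he1 | he2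
          · have he1' : e = 1 := by omega
            subst he1'
            rw [pow_one, Nat.totient_prime hp] at hdvd hlt3
            have hp5 : 5 ≤ p := by omega
            have := Nat.le_of_dvd (by omega) hdvd
            omega
          · have hpd : p ∣ Nat.totient (p ^ e) := by
              rw [Nat.totient_prime_pow hp (by omega)]
              exact dvd_mul_of_dvd_left (dvd_pow_self p (by omega : e - 1 ≠ 0)) _
            have hp2' : p ∣ 2 := by
              have h2e : 2 = Nat.totient (p ^ e) - (Nat.totient (p ^ e) - 2) := by omega
              rw [h2e]; exact Nat.dvd_sub hpd hdvd
            have := Nat.le_of_dvd (by norm_num) hp2'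
            have := hp.two_le
            omega
        have hpA : (p : ℤ) ∣ 2 * (Polynomial.derivative^[3] (cyclotomic (p ^ e) ℤ)).eval 1 := by
          have h9 : (p : ℤ) ∣ (Polynomial.derivative^[3] (cyclotomic (p ^ e) ℤ)).eval 1 := by
            rw [hAB]
            exact Dvd.dvd.mul_left hpB _
          exact h9.mul_left 2
        have hcop : IsCoprime ((p : ℕ) : ℤ) ((Nat.totient (p ^ e) - 2 : ℕ) : ℤ) :=
          Nat.isCoprime_iff_coprime.mpr ((Nat.Prime.coprime_iff_not_dvd hp).mpr hpnd)
        have hfin := hcop.mul_dvd hpA hdvd2A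
        obtain ⟨z, hz⟩ := hfin
        refine ⟨z, ?_⟩
        rw [hz, heval1, ← hMcast]
        ring
    · have heval1 : (cyclotomic n ℤ).eval 1 = 1 := by
        apply eval_one_cyclotomic_not_prime_pow
        intro p hp i hpi
        rcases Nat.eq_zero_or_pos i with hi | hi
        · subst hi; simp at hpi; omega
        · exact hpp ⟨p, i, Nat.prime_iff.mp hp, hi, hpi⟩
      refine ⟨W + ((Nat.totient n - 2 : ℕ) : ℤ) * V, ?_⟩
      rw [heval1, one_mul, ← hMcast]
      exact h2A
end
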